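/- Let ρ, σ be density operators on a finite-dimensional Hilbert space. The maximum of Tr(Λ_ρρ) over all PSD operators Λ_ρ ≤ I satisfying Tr(Λ_ρσ) = 0 equals 1 − Tr(Π_σρ), where Π_σ is the support projection of σ; the maximum is attained at Λ_ρ = Π_{ρ+σ} − Π_σ. -/

import Mathlib

open Matrix
open scoped ComplexOrder

/-- `P` is an orthogonal projection matrix. -/
def IsOrthProj {n : ℕ} (P : Matrix (Fin n) (Fin n) ℂ) : Prop :=
  P.IsHermitian ∧ P * P = P

/-- `P` is the orthogonal projection onto the range (support) of `ν`. -/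
def IsSupportProj {n : ℕ} (ν P : Matrix (Fin n) (Fin n) ℂ) : Prop :=
  IsOrthProj P ∧ LinearMap.range P.mulVecLin = LinearMap.range ν.mulVecLin

section helpers

variable {n : ℕ}

open scoped MatrixOrder

private lemma mat_ext_of_mulVec {A B : Matrix (Fin n) (Fin n) ℂ}
    (h : ∀ v, A.mulVec v = B.mulVec v) : A = B := by
  ext i j
  have := congrFun (h (Pi.single j 1)) i
  simpa [Matrix.mulVec_single] using this

private lemma trace_psd_nonneg {A : Matrix (Fin n) (Fin n) ℂ} (hA : A.PosSemidef) :
    (0:ℂ) ≤ A.trace := by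
  rw [Matrix.trace]
  apply Finset.sum_nonneg
  intro i _
  exact hA.diag_nonneg

private lemma eq_zero_of_trace_cmul_self {A : Matrix (Fin n) (Fin n) ℂ}
    (h : (Aᴴ * A).trace = 0) : A = 0 := by
  have hre : ∑ j, ∑ i, Complex.normSq (A i j) = 0 := by
    have := congrArg Complex.re h
    rw [Matrix.trace] at this
    simpa [Matrix.diag, Matrix.mul_apply, Matrix.conjTranspose_apply, Complex.normSq_apply,
      Complex.re_sum, mul_comm] using this
  ext i j
  have h1 : ∀ j ∈ Finset.univ, (0:ℝ) ≤ ∑ i, Complex.normSq (A i j) := fun j _ =>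
    Finset.sum_nonneg fun i _ => Complex.normSq_nonneg _
  have h2 := (Finset.sum_eq_zero_iff_of_nonneg h1).mp hre j (Finset.mem_univ j)
  have h3 := (Finset.sum_eq_zero_iff_of_nonneg
    (fun i _ => Complex.normSq_nonneg (A i j))).mp h2 i (Finset.mem_univ i)
  simpa using Complex.normSq_eq_zero.mp h3

/-- Trace of a product of PSD matrices is nonnegative. -/
private lemma trace_mul_psd_nonneg {A B : Matrix (Fin n) (Fin n) ℂ}
    (hA : A.PosSemidef) (hB : B.PosSemidef) : (0:ℂ) ≤ (A * B).trace := by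
  set S := CFC.sqrt A with hS
  have hSS : S * S = A := CFC.sqrt_mul_sqrt_self A hA.nonneg
  have hSh : Sᴴ = S := (CFC.sqrt_nonneg A).posSemidef.1
  have h1 : (A * B).trace = (S * B * Sᴴ).trace := by
    rw [hSh, ← hSS, Matrix.mul_assoc, Matrix.trace_mul_comm]
  rw [h1]
  exact trace_psd_nonneg (hB.mul_mul_conjTranspose_same S)

/-- If `A`, `B` are PSD and `Tr(AB) = 0` then `AB = 0`. -/
private lemma mul_eq_zero_of_trace_mul_psd {A B : Matrix (Fin n) (Fin n) ℂ}
    (hA : A.PosSemidef) (hB : B.PosSemidef) (h : (A * B).trace = 0) : A * B = 0 := by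
  set S := CFC.sqrt A with hS
  set T := CFC.sqrt B with hT
  have hSS : S * S = A := CFC.sqrt_mul_sqrt_self A hA.nonneg
  have hTT : T * T = B := CFC.sqrt_mul_sqrt_self B hB.nonneg
  have hSh : Sᴴ = S := (CFC.sqrt_nonneg A).posSemidef.1
  have hTh : Tᴴ = T := (CFC.sqrt_nonneg B).posSemidef.1
  have hTSh : (T * S)ᴴ = S * T := by rw [Matrix.conjTranspose_mul, hSh, hTh]
  have htr : ((T * S)ᴴ * (T * S)).trace = 0 := by
    rw [hTSh]
    have e1 : S * T * (T * S) = S * (T * T * S) := by noncomm_ring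
    rw [e1, Matrix.trace_mul_comm]
    have e2 : T * T * S * S = (T * T) * (S * S) := by noncomm_ring
    rw [e2, hSS, hTT, Matrix.trace_mul_comm]
    exact h
  have hTS : T * S = 0 := eq_zero_of_trace_cmul_self htr
  have hST : S * T = 0 := by rw [← hTSh, hTS, Matrix.conjTranspose_zero]
  have e3 : A * B = S * (S * T) * T := by rw [← hSS, ← hTT]; noncomm_ring
  rw [e3, hST, Matrix.mul_zero, Matrix.zero_mul]

/-- A support projection absorbs its matrix: `P * ν = ν`. -/
private lemma supportProj_mul_self {ν P : Matrix (Fin n) (Fin n) ℂ}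
    (hP : IsSupportProj ν P) : P * ν = ν := by
  apply mat_ext_of_mulVec
  intro v
  have hmem : ν.mulVec v ∈ LinearMap.range P.mulVecLin := by
    rw [hP.2]; exact ⟨v, by simp [Matrix.mulVecLin_apply]⟩
  obtain ⟨w, hw⟩ := hmem
  rw [Matrix.mulVecLin_apply] at hw
  calc (P * ν).mulVec v = P.mulVec (ν.mulVec v) := by rw [← Matrix.mulVec_mulVec]
    _ = P.mulVec (P.mulVec w) := by rw [hw]
    _ = (P * P).mulVec w := Matrix.mulVec_mulVec _ _ _
    _ = P.mulVec w := by rw [hP.1.2]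
    _ = ν.mulVec v := hw

/-- If `Λν = 0` and `P` is the support projection of `ν`, then `ΛP = 0`. -/
private lemma mul_supportProj_eq_zero {Λ ν P : Matrix (Fin n) (Fin n) ℂ}
    (hP : IsSupportProj ν P) (h : Λ * ν = 0) : Λ * P = 0 := by
  apply mat_ext_of_mulVec
  intro v
  have hmem : P.mulVec v ∈ LinearMap.range ν.mulVecLin := by
    rw [← hP.2]; exact ⟨v, by simp [Matrix.mulVecLin_apply]⟩
  obtain ⟨w, hw⟩ := hmem
  rw [Matrix.mulVecLin_apply] at hw
  calc (Λ * P).mulVec v = Λ.mulVec (P.mulVec v) := by rw [← Matrix.mulVec_mulVec]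
    _ = Λ.mulVec (ν.mulVec w) := by rw [hw]
    _ = (Λ * ν).mulVec w := Matrix.mulVec_mulVec _ _ _
    _ = (0 : Matrix (Fin n) (Fin n) ℂ).mulVec w := by rw [h]
    _ = (0 : Matrix (Fin n) (Fin n) ℂ).mulVec v := by simp

private lemma orthProj_posSemidef {P : Matrix (Fin n) (Fin n) ℂ}
    (hP : IsOrthProj P) : P.PosSemidef := by
  have : P = Pᴴ * P := by rw [hP.1.eq, hP.2]
  rw [this]
  exact Matrix.posSemidef_conjTranspose_mul_self P

private lemma orthProj_compl {P : Matrix (Fin n) (Fin n) ℂ}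
    (hP : IsOrthProj P) : IsOrthProj (1 - P) := by
  constructor
  · exact (Matrix.isHermitian_one).sub hP.1
  · have e : (1 - P) * (1 - P) = 1 - P - P + P * P := by noncomm_ring
    rw [e, hP.2]
    abel

end helpers

/-- The maximum of `Tr(Λ_ρρ)` over PSD `Λ_ρ ≤ I` with `Tr(Λ_ρσ) = 0` equals
`1 − Tr(Π_σρ)`, attained at `Λ_ρ = Π_{ρ+σ} − Π_σ`. -/
theorem stmt_18 {n : ℕ} (ρ σ : Matrix (Fin n) (Fin n) ℂ)
    (hρ : ρ.PosSemidef) (hσ : σ.PosSemidef)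
    (hρ1 : ρ.trace = 1) (hσ1 : σ.trace = 1)
    (Psig : Matrix (Fin n) (Fin n) ℂ) (hPsig : IsSupportProj σ Psig)
    (Prs : Matrix (Fin n) (Fin n) ℂ) (hPrs : IsSupportProj (ρ + σ) Prs) :
    IsGreatest
      {t : ℝ | ∃ Λ : Matrix (Fin n) (Fin n) ℂ,
        Λ.PosSemidef ∧ (1 - Λ).PosSemidef ∧ (Λ * σ).trace = 0 ∧
        t = ((Λ * ρ).trace).re}
      (1 - ((Psig * ρ).trace).re) ∧
    (((Prs - Psig) * ρ).trace).re = 1 - ((Psig * ρ).trace).re := by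
  have hPσ : Psig * σ = σ := supportProj_mul_self hPsig
  -- membership: witness Λ = 1 - Psig
  have hmem : (1 - ((Psig * ρ).trace).re) ∈
      {t : ℝ | ∃ Λ : Matrix (Fin n) (Fin n) ℂ,
        Λ.PosSemidef ∧ (1 - Λ).PosSemidef ∧ (Λ * σ).trace = 0 ∧
        t = ((Λ * ρ).trace).re} := by
    refine ⟨1 - Psig, orthProj_posSemidef (orthProj_compl hPsig.1), ?_, ?_, ?_⟩
    · rw [sub_sub_cancel]
      exact orthProj_posSemidef hPsig.1
    · rw [sub_mul, one_mul, hPσ, sub_self, Matrix.trace_zero]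
    · rw [sub_mul, one_mul, Matrix.trace_sub, hρ1]
      simp
  refine ⟨⟨hmem, ?_⟩, ?_⟩
  · -- upper bound
    rintro t ⟨Λ, hΛ, hΛ1, hΛσ, rfl⟩
    have hΛσ0 : Λ * σ = 0 := mul_eq_zero_of_trace_mul_psd hΛ hσ hΛσ
    have hΛP : Λ * Psig = 0 := mul_supportProj_eq_zero hPsig hΛσ0
    have hPΛ : Psig * Λ = 0 := by
      have := congrArg Matrix.conjTranspose hΛP
      rwa [Matrix.conjTranspose_mul, hΛ.1.eq, hPsig.1.1.eq, Matrix.conjTranspose_zero] at this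
    set Q : Matrix (Fin n) (Fin n) ℂ := 1 - Psig with hQ
    have hQh : Qᴴ = Q := (orthProj_compl hPsig.1).1.eq
    have hQQ : Q * Q = Q := (orthProj_compl hPsig.1).2
    have hΛQ : Λ * Q = Λ := by rw [hQ, mul_sub, mul_one, hΛP, sub_zero]
    have hQΛ : Q * Λ = Λ := by rw [hQ, sub_mul, one_mul, hPΛ, sub_zero]
    set M : Matrix (Fin n) (Fin n) ℂ := Q * ρ * Q with hM
    have hMpsd : M.PosSemidef := by
      have := hρ.mul_mul_conjTranspose_same Q
      rwa [hQh] at this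
    have htr_eq : (Λ * ρ).trace = (Λ * M).trace := by
      have e : Λ * M = Λ * ρ * Q := by
        rw [hM, show Λ * (Q * ρ * Q) = Λ * Q * ρ * Q from by noncomm_ring, hΛQ]
      rw [e, Matrix.trace_mul_cycle, hQΛ]
    have hnn : (0:ℂ) ≤ ((1 - Λ) * M).trace := trace_mul_psd_nonneg hΛ1 hMpsd
    have hexp : ((1 - Λ) * M).trace = M.trace - (Λ * M).trace := by
      rw [sub_mul, one_mul, Matrix.trace_sub]
    have hMtr : M.trace = 1 - (Psig * ρ).trace := by
      rw [hM, Matrix.trace_mul_cycle, hQQ, hQ, sub_mul, one_mul, Matrix.trace_sub, hρ1]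
    have hre : 0 ≤ (((1 - Λ) * M).trace).re := by
      have := hnn
      rw [Complex.le_def] at this
      simpa using this.1
    rw [htr_eq]
    have : (((1 - Λ) * M).trace).re = (M.trace).re - ((Λ * M).trace).re := by
      rw [hexp, Complex.sub_re]
    rw [this, hMtr] at hre
    have h1re : ((1 - (Psig * ρ).trace : ℂ)).re = 1 - ((Psig * ρ).trace).re := by
      simp [Complex.sub_re]
    rw [h1re] at hre
    linarith
  · -- attainment
    have hPrs_abs : Prs * (ρ + σ) = ρ + σ := supportProj_mul_self hPrs
    set Q : Matrix (Fin n) (Fin n) ℂ := 1 - Prs with hQ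
    have hQpsd : Q.PosSemidef := orthProj_posSemidef (orthProj_compl hPrs.1)
    have hQ0 : Q * (ρ + σ) = 0 := by
      rw [hQ, sub_mul, one_mul, hPrs_abs, sub_self]
    have hsum : (Q * ρ).trace + (Q * σ).trace = 0 := by
      rw [← Matrix.trace_add, ← mul_add, hQ0, Matrix.trace_zero]
    have hnnρ : (0:ℂ) ≤ (Q * ρ).trace := trace_mul_psd_nonneg hQpsd hρ
    have hnnσ : (0:ℂ) ≤ (Q * σ).trace := trace_mul_psd_nonneg hQpsd hσ
    have hQρtr : (Q * ρ).trace = 0 := by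
      rw [Complex.le_def] at hnnρ hnnσ
      have h1 := hnnρ.1; have h2 := hnnρ.2; have h3 := hnnσ.1; have h4 := hnnσ.2
      simp only [Complex.zero_re, Complex.zero_im] at h1 h2 h3 h4
      have h5 := congrArg Complex.re hsum
      have h6 := congrArg Complex.im hsum
      simp only [Complex.add_re, Complex.add_im, Complex.zero_re, Complex.zero_im] at h5 h6
      have hr : (Q * ρ).trace.re = 0 := by linarith
      have hi : (Q * ρ).trace.im = 0 := by linarith
      exact Complex.ext (by simpa using hr) (by simpa using hi)
    have hQρ : Q * ρ = 0 := mul_eq_zero_of_trace_mul_psd hQpsd hρ hQρtr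
    have hPrsρ : Prs * ρ = ρ := by
      have h0 : ρ - Prs * ρ = 0 := by
        have := hQρ
        rw [hQ, sub_mul, one_mul] at this
        exact this
      exact (sub_eq_zero.mp h0).symm
    rw [sub_mul, hPrsρ, Matrix.trace_sub, hρ1]
    simp [Complex.sub_re]
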